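/- arXiv:0909.2983 — 3 statements merged into one kernel-verified Lean document; each statement's English description precedes it below -/
import Mathlib

section
/- For positive integers l1 ≤ m1 < l2 ≤ m2 and n, the number of subsets X of [l1,m1] ∪ [l2,m2] containing both l1 and l2 with gcd(X ∪ {n}) = 1 equals the sum over common divisors d of l1, l2 and n of μ(d)·2^(⌊m1/d⌋ + ⌊m2/d⌋ − (l1+l2)/d). -/
open Finset
section Helpers
open ArithmeticFunction
open scoped ArithmeticFunction.Moebius ArithmeticFunction.zeta

lemma moebius_sum_ite (k : ℕ) : ∑ d ∈ k.divisors, (μ d : ℤ) = if k = 1 then 1 else 0 := by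
  calc ∑ d ∈ k.divisors, (μ d : ℤ) = (↑ζ * μ : ArithmeticFunction ℤ) k :=
        coe_zeta_mul_apply.symm
    _ = (1 : ArithmeticFunction ℤ) k := by rw [coe_zeta_mul_moebius]
    _ = if k = 1 then 1 else 0 := one_apply

lemma ioc_filter_card (d a b : ℕ) (hab : a ≤ b) :
    ((Finset.Ioc a b).filter (d ∣ ·)).card = b / d - a / d := by
  have h : Finset.Ioc 0 a ∪ Finset.Ioc a b = Finset.Ioc 0 b :=
    Finset.Ioc_union_Ioc_eq_Ioc (Nat.zero_le a) hab
  have hdisj : Disjoint ((Finset.Ioc 0 a).filter (d ∣ ·)) ((Finset.Ioc a b).filter (d ∣ ·)) := by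
    simp only [Finset.disjoint_left, Finset.mem_filter, Finset.mem_Ioc]
    omega
  have key : (((Finset.Ioc 0 a).filter (d ∣ ·)).card + ((Finset.Ioc a b).filter (d ∣ ·)).card)
      = b / d := by
    rw [← Finset.card_union_of_disjoint hdisj, ← Finset.filter_union, h]
    simpa using Nat.Ioc_filter_dvd_card_eq_div b d
  have h2 : ((Finset.Ioc 0 a).filter (d ∣ ·)).card = a / d := by
    simpa using Nat.Ioc_filter_dvd_card_eq_div a d
  omega

lemma pred_div_of_dvd {d l : ℕ} (hd : 0 < d) (hl : 0 < l) (h : d ∣ l) :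
    (l - 1) / d = l / d - 1 := by
  obtain ⟨k, rfl⟩ := h
  have hk : 0 < k := by
    rcases Nat.eq_zero_or_pos k with h0 | h0
    · simp [h0] at hl
    · exact h0
  obtain ⟨k', rfl⟩ := Nat.exists_eq_add_of_lt hk
  rw [Nat.mul_div_cancel_left _ hd]
  have h1 : d * (0 + k' + 1) - 1 = (d - 1) + d * k' := by
    have := Nat.mul_le_mul_left d (Nat.one_le_iff_ne_zero.mpr (by omega) : 1 ≤ 0 + k' + 1)
    cases d with
    | zero => omega
    | succ d' => ring_nf; omega
  rw [h1, Nat.add_mul_div_left _ _ hd, Nat.div_eq_of_lt (by omega)]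
  omega

lemma card_powerset_filter_two {M : Finset ℕ} {a b : ℕ} (ha : a ∈ M) (hb : b ∈ M)
    (hab : a ≠ b) :
    (M.powerset.filter (fun X => a ∈ X ∧ b ∈ X)).card = 2 ^ (M.card - 2) := by
  have hsub : {a, b} ⊆ M := by
    intro x hx; simp only [Finset.mem_insert, Finset.mem_singleton] at hx
    rcases hx with rfl | rfl <;> assumption
  have hcard2 : ({a, b} : Finset ℕ).card = 2 := by
    rw [Finset.card_insert_of_notMem (by simp [hab]), Finset.card_singleton]
  have := Finset.card_bij' (s := M.powerset.filter (fun X => a ∈ X ∧ b ∈ X))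
      (t := (M \ {a, b}).powerset)
      (fun X _ => X \ {a, b}) (fun Y _ => Y ∪ {a, b})
      (fun X hX => by
        simp only [Finset.mem_filter, Finset.mem_powerset] at hX ⊢
        exact Finset.sdiff_subset_sdiff hX.1 Finset.Subset.rfl)
      (fun Y hY => by
        simp only [Finset.mem_powerset] at hY
        simp only [Finset.mem_filter, Finset.mem_powerset]
        refine ⟨Finset.union_subset (hY.trans Finset.sdiff_subset) hsub, ?_, ?_⟩ <;> simp)
      (fun X hX => by
        simp only [Finset.mem_filter, Finset.mem_powerset] at hX
        exact Finset.sdiff_union_of_subset (by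
          intro x hx; simp only [Finset.mem_insert, Finset.mem_singleton] at hx
          rcases hx with rfl | rfl
          · exact hX.2.1
          · exact hX.2.2))
      (fun Y hY => by
        simp only [Finset.mem_powerset] at hY
        apply Finset.union_sdiff_cancel_right
        rw [Finset.disjoint_right]
        intro x hx hxY
        have := hY hxY
        simp only [Finset.mem_sdiff] at this
        exact this.2 hx)
  rw [this, Finset.card_powerset, Finset.card_sdiff_of_subset hsub, hcard2]

lemma nat_dvd_gcd_iff {d a n : ℕ} : d ∣ Nat.gcd a n ↔ d ∣ a ∧ d ∣ n :=
  ⟨fun h => ⟨h.trans (Nat.gcd_dvd_left _ _), h.trans (Nat.gcd_dvd_right _ _)⟩,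
   fun ⟨h1, h2⟩ => Nat.dvd_gcd h1 h2⟩

lemma card_mult_subsets (l1 m1 l2 m2 n d : ℕ) (hl1 : 0 < l1) (h1 : l1 ≤ m1) (h12 : m1 < l2)
    (h2 : l2 ≤ m2) (hd0 : 0 < d) (hd1 : d ∣ l1) (hd2 : d ∣ l2) (hdn : d ∣ n) :
    ((Finset.Icc l1 m1 ∪ Finset.Icc l2 m2).powerset.filter
        (fun X => (l1 ∈ X ∧ l2 ∈ X) ∧ d ∣ Nat.gcd (X.gcd _root_.id) n)).card
      = 2 ^ (m1 / d + m2 / d - (l1 + l2) / d) := by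
  set S := Finset.Icc l1 m1 ∪ Finset.Icc l2 m2 with hS
  set M := S.filter (d ∣ ·) with hM
  have hl2pos : 0 < l2 := lt_of_le_of_lt (Nat.zero_le _) h12
  have hl1M : l1 ∈ M := by
    simp only [hM, hS, Finset.mem_filter, Finset.mem_union, Finset.mem_Icc]
    exact ⟨Or.inl ⟨le_refl _, h1⟩, hd1⟩
  have hl2M : l2 ∈ M := by
    simp only [hM, hS, Finset.mem_filter, Finset.mem_union, Finset.mem_Icc]
    exact ⟨Or.inr ⟨le_refl _, h2⟩, hd2⟩
  have hne : l1 ≠ l2 := by omega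
  have heq : (S.powerset.filter (fun X => (l1 ∈ X ∧ l2 ∈ X) ∧ d ∣ Nat.gcd (X.gcd _root_.id) n))
      = M.powerset.filter (fun X => l1 ∈ X ∧ l2 ∈ X) := by
    ext X
    simp only [Finset.mem_filter, Finset.mem_powerset, hM, nat_dvd_gcd_iff,
      Finset.dvd_gcd_iff, Finset.subset_iff, Finset.mem_filter, _root_.id]
    constructor
    · rintro ⟨hXS, ⟨ha, hb⟩, hgcd, -⟩
      exact ⟨fun x hx => ⟨hXS hx, hgcd x hx⟩, ha, hb⟩
    · rintro ⟨hXM, ha, hb⟩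
      exact ⟨fun x hx => (hXM hx).1, ⟨ha, hb⟩, fun x hx => (hXM hx).2, hdn⟩
  rw [heq, card_powerset_filter_two hl1M hl2M hne]
  congr 1
  -- card M = (m1/d - l1/d + 1) + (m2/d - l2/d + 1)
  have hdisj : Disjoint ((Finset.Icc l1 m1).filter (d ∣ ·)) ((Finset.Icc l2 m2).filter (d ∣ ·)) := by
    simp only [Finset.disjoint_left, Finset.mem_filter, Finset.mem_Icc]
    omega
  have hMcard : M.card = ((Finset.Icc l1 m1).filter (d ∣ ·)).card
      + ((Finset.Icc l2 m2).filter (d ∣ ·)).card := by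
    rw [hM, hS, Finset.filter_union, Finset.card_union_of_disjoint hdisj]
  have hIcc1 : Finset.Icc l1 m1 = Finset.Ioc (l1 - 1) m1 := by
    ext x; simp only [Finset.mem_Icc, Finset.mem_Ioc]; omega
  have hIcc2 : Finset.Icc l2 m2 = Finset.Ioc (l2 - 1) m2 := by
    ext x; simp only [Finset.mem_Icc, Finset.mem_Ioc]; omega
  have hc1 : ((Finset.Icc l1 m1).filter (d ∣ ·)).card = m1 / d - (l1 / d - 1) := by
    rw [hIcc1, ioc_filter_card d _ _ (by omega), pred_div_of_dvd hd0 hl1 hd1]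
  have hc2 : ((Finset.Icc l2 m2).filter (d ∣ ·)).card = m2 / d - (l2 / d - 1) := by
    rw [hIcc2, ioc_filter_card d _ _ (by omega), pred_div_of_dvd hd0 hl2pos hd2]
  have hdiv1 : 1 ≤ l1 / d := Nat.one_le_div_iff hd0 |>.mpr (Nat.le_of_dvd hl1 hd1)
  have hdiv2 : 1 ≤ l2 / d := Nat.one_le_div_iff hd0 |>.mpr (Nat.le_of_dvd hl2pos hd2)
  have hle1 : l1 / d ≤ m1 / d := Nat.div_le_div_right h1
  have hle2 : l2 / d ≤ m2 / d := Nat.div_le_div_right h2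
  have hadd : (l1 + l2) / d = l1 / d + l2 / d := Nat.add_div_of_dvd_right hd1
  rw [hMcard, hc1, hc2, hadd]
  omega

end Helpers

theorem stmt9 (l1 m1 l2 m2 n : ℕ) (hl1 : 0 < l1) (h1 : l1 ≤ m1) (h12 : m1 < l2)
    (h2 : l2 ≤ m2) (hn : 0 < n) :
    (((((Finset.Icc l1 m1) ∪ (Finset.Icc l2 m2)).powerset.filter
        (fun X => l1 ∈ X ∧ l2 ∈ X ∧ Nat.gcd (X.gcd id) n = 1)).card : ℤ)) =
      ∑ d ∈ (Nat.gcd l1 (Nat.gcd l2 n)).divisors, (ArithmeticFunction.moebius d) *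
        2 ^ (m1 / d + m2 / d - (l1 + l2) / d) := by
  set S := Finset.Icc l1 m1 ∪ Finset.Icc l2 m2 with hS
  set G := Nat.gcd l1 (Nat.gcd l2 n) with hG
  have hG0 : 0 < G := Nat.gcd_pos_of_pos_left _ hl1
  set F := S.powerset.filter (fun X => l1 ∈ X ∧ l2 ∈ X) with hF
  have hfilter : S.powerset.filter (fun X => l1 ∈ X ∧ l2 ∈ X ∧ Nat.gcd (X.gcd id) n = 1)
      = F.filter (fun X => Nat.gcd (X.gcd id) n = 1) := by
    rw [hF, Finset.filter_filter]
    apply Finset.filter_congr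
    intro X _; tauto
  rw [hfilter, Finset.card_filter]
  push_cast
  have step2 : ∀ X ∈ F, (if Nat.gcd (X.gcd id) n = 1 then (1:ℤ) else 0)
      = ∑ d ∈ G.divisors, if d ∣ Nat.gcd (X.gcd id) n then (ArithmeticFunction.moebius d : ℤ) else 0 := by
    intro X hX
    simp only [hF, Finset.mem_filter, Finset.mem_powerset] at hX
    obtain ⟨hXS, hl1X, hl2X⟩ := hX
    have hdvd1 : X.gcd id ∣ l1 := Finset.gcd_dvd hl1X
    have hdvd2 : X.gcd id ∣ l2 := Finset.gcd_dvd hl2X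
    have hgG : Nat.gcd (X.gcd id) n ∣ G := by
      apply Nat.dvd_gcd ((Nat.gcd_dvd_left _ _).trans hdvd1)
      exact Nat.dvd_gcd ((Nat.gcd_dvd_left _ _).trans hdvd2) (Nat.gcd_dvd_right _ _)
    rw [← moebius_sum_ite, ← Nat.divisors_filter_dvd_of_dvd hG0.ne' hgG, Finset.sum_filter]
  rw [Finset.sum_congr rfl step2, Finset.sum_comm]
  apply Finset.sum_congr rfl
  intro d hd
  have hdG : d ∣ G := (Nat.mem_divisors.mp hd).1
  have hd0 : 0 < d := Nat.pos_of_mem_divisors hd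
  have hd1 : d ∣ l1 := hdG.trans (Nat.gcd_dvd_left _ _)
  have hd2 : d ∣ l2 := hdG.trans ((Nat.gcd_dvd_right _ _).trans (Nat.gcd_dvd_left _ _))
  have hdn : d ∣ n := hdG.trans ((Nat.gcd_dvd_right _ _).trans (Nat.gcd_dvd_right _ _))
  have hsum : ∑ X ∈ F, (if d ∣ Nat.gcd (X.gcd id) n then (ArithmeticFunction.moebius d : ℤ) else 0)
      = (ArithmeticFunction.moebius d : ℤ) * (F.filter (fun X => d ∣ Nat.gcd (X.gcd id) n)).card := by
    rw [← Finset.sum_filter, Finset.sum_const, nsmul_eq_mul, mul_comm]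
  rw [hsum]
  congr 1
  have : F.filter (fun X => d ∣ Nat.gcd (X.gcd id) n)
      = S.powerset.filter (fun X => (l1 ∈ X ∧ l2 ∈ X) ∧ d ∣ Nat.gcd (X.gcd id) n) := by
    rw [hF, Finset.filter_filter]
  rw [this, card_mult_subsets l1 m1 l2 m2 n d hl1 h1 h12 h2 hd0 hd1 hd2 hdn]
  push_cast
  ring
end

section
/- For positive integers m1 < l2 ≤ m2 and n > 1, the number of nonempty subsets X of [1,m1] ∪ [l2,m2] with gcd(X ∪ {n}) = 1 equals the sum over divisors d of n of μ(d)·2^(⌊m1/d⌋ + ⌊m2/d⌋ − ⌊(l2−1)/d⌋). -/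
open Finset

lemma moeb_sum (k : ℕ) : ∑ d ∈ k.divisors, (ArithmeticFunction.moebius d : ℤ) = if k = 1 then 1 else 0 := by
  rw [← ArithmeticFunction.coe_mul_zeta_apply, ArithmeticFunction.moebius_mul_coe_zeta,
    ArithmeticFunction.one_apply]

theorem stmt11 (m1 l2 m2 n : ℕ) (hm1 : 0 < m1) (h12 : m1 < l2) (h2 : l2 ≤ m2) (hn : 1 < n) :
    (((((Finset.Icc 1 m1) ∪ (Finset.Icc l2 m2)).powerset.filter
        (fun X => X.Nonempty ∧ Nat.gcd (X.gcd id) n = 1)).card : ℤ)) =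
      ∑ d ∈ n.divisors, (ArithmeticFunction.moebius d) *
        2 ^ (m1 / d + m2 / d - (l2 - 1) / d) := by
  have hn0 : n ≠ 0 := by omega
  set A := (Finset.Icc 1 m1) ∪ (Finset.Icc l2 m2) with hA
  -- counting lemma
  have hcount : ∀ d : ℕ, 0 < d →
      (A.filter (fun x => d ∣ x)).card = m1 / d + m2 / d - (l2 - 1) / d := by
    intro d hd
    have hA' : A = Finset.Ioc 0 m1 ∪ Finset.Ioc (l2 - 1) m2 := by
      ext x; simp only [hA, mem_union, mem_Icc, mem_Ioc]; omega
    have hdisj : Disjoint (Finset.Ioc 0 m1) (Finset.Ioc (l2-1) m2) := by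
      rw [Finset.disjoint_left]; intro a ha hb
      simp only [Finset.mem_Ioc] at ha hb; omega
    have hsub : Finset.Ioc 0 (l2-1) ⊆ Finset.Ioc 0 m2 := by
      apply Finset.Ioc_subset_Ioc_right; omega
    have hsd : (Finset.Ioc (l2-1) m2).filter (fun x => d ∣ x)
        = (Finset.Ioc 0 m2).filter (fun x => d ∣ x) \ (Finset.Ioc 0 (l2-1)).filter (fun x => d ∣ x) := by
      ext x; simp only [Finset.mem_Ioc, Finset.mem_sdiff, Finset.mem_filter]; omega
    rw [hA', Finset.filter_union, Finset.card_union_of_disjoint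
      (Finset.disjoint_filter_filter hdisj), hsd,
      Finset.card_sdiff_of_subset (Finset.filter_subset_filter _ hsub),
      Nat.Ioc_filter_dvd_card_eq_div, Nat.Ioc_filter_dvd_card_eq_div,
      Nat.Ioc_filter_dvd_card_eq_div]
    have h3 : (l2-1)/d ≤ m2/d := Nat.div_le_div_right (by omega)
    rw [Nat.add_sub_assoc h3]
  set P := A.powerset.filter (fun X => X.Nonempty) with hP
  have hstep1 : ((A.powerset.filter
        (fun X => X.Nonempty ∧ Nat.gcd (X.gcd id) n = 1)).card : ℤ)
      = ∑ X ∈ P, if Nat.gcd (X.gcd id) n = 1 then (1:ℤ) else 0 := by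
    rw [hP, ← Finset.filter_filter, Finset.card_filter]
    push_cast
    rfl
  rw [hstep1]
  have hstep2 : ∀ X ∈ P, (if Nat.gcd (X.gcd id) n = 1 then (1:ℤ) else 0)
      = ∑ d ∈ n.divisors, if d ∣ X.gcd id then (ArithmeticFunction.moebius d : ℤ) else 0 := by
    intro X _
    rw [← moeb_sum, ← Finset.sum_filter]
    congr 1
    ext d
    simp only [Nat.mem_divisors, Finset.mem_filter, Nat.dvd_gcd_iff]
    constructor
    · rintro ⟨⟨h1, h2⟩, h3⟩; exact ⟨⟨h2, hn0⟩, h1⟩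
    · rintro ⟨⟨h1, h2⟩, h3⟩
      refine ⟨⟨h3, h1⟩, ?_⟩
      simp only [ne_eq, Nat.gcd_eq_zero_iff, not_and]
      intro _; exact hn0
  rw [Finset.sum_congr rfl hstep2, Finset.sum_comm]
  have hstep3 : ∀ d ∈ n.divisors,
      (∑ X ∈ P, if d ∣ X.gcd id then (ArithmeticFunction.moebius d : ℤ) else 0)
      = (ArithmeticFunction.moebius d : ℤ) * (2 ^ (m1 / d + m2 / d - (l2 - 1) / d) - 1) := by
    intro d hd
    have hd0 : 0 < d := Nat.pos_of_mem_divisors hd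
    rw [← Finset.sum_filter]
    have hPf : P.filter (fun X => d ∣ X.gcd id)
        = (A.filter (fun x => d ∣ x)).powerset.filter (fun X => X.Nonempty) := by
      rw [hP, Finset.filter_filter]
      ext X
      simp only [Finset.mem_filter, Finset.mem_powerset, Finset.dvd_gcd_iff,
        Finset.subset_iff, Finset.mem_filter, id_eq]
      constructor
      · rintro ⟨hXA, hne, hdvd⟩; exact ⟨fun x hx => ⟨hXA hx, hdvd x hx⟩, hne⟩
      · rintro ⟨hXf, hne⟩; exact ⟨fun x hx => (hXf hx).1, hne, fun x hx => (hXf hx).2⟩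
    rw [hPf]
    have hset : ((A.filter (fun x => d ∣ x)).powerset.filter (fun X => X.Nonempty))
        = (A.filter (fun x => d ∣ x)).powerset.erase ∅ := by
      ext X
      simp [Finset.nonempty_iff_ne_empty, and_comm]
    rw [hset, Finset.sum_const, Finset.card_erase_of_mem (Finset.empty_mem_powerset _),
      Finset.card_powerset, hcount d hd0, nsmul_eq_mul, mul_comm]
    congr 1
    push_cast [Nat.one_le_two_pow]
    ring
  rw [Finset.sum_congr rfl hstep3]
  simp only [mul_sub, mul_one, Finset.sum_sub_distrib, moeb_sum n]
  rw [if_neg (by omega : n ≠ 1)]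
  ring
end

section
/- For positive integers m1 < l2 ≤ m2, n > 1, and k ≥ 1, the number of k-element subsets X of [1,m1] ∪ [l2,m2] with gcd(X ∪ {n}) = 1 equals the sum over divisors d of n of μ(d)·C(⌊m1/d⌋ + ⌊m2/d⌋ − ⌊(l2−1)/d⌋, k). -/
open Finset

lemma countA (A : Finset ℕ) (d k : ℕ) :
    ((A.powerset.filter (fun X => X.card = k)).filter (fun X => ∀ x ∈ X, d ∣ x)).card
      = ((A.filter (d ∣ ·)).card).choose k := by
  rw [← Finset.card_powersetCard]
  congr 1
  ext X
  simp only [mem_filter, mem_powerset, mem_powersetCard, Finset.subset_iff, mem_filter]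
  constructor
  · rintro ⟨⟨hsub, hcard⟩, hdvd⟩; exact ⟨fun x hx => ⟨hsub hx, hdvd x hx⟩, hcard⟩
  · rintro ⟨hsub, hcard⟩; exact ⟨⟨fun x hx => (hsub hx).1, hcard⟩, fun x hx => (hsub hx).2⟩

lemma countIoc (a b d : ℕ) (hab : a ≤ b) :
    ((Ioc a b).filter (d ∣ ·)).card = b / d - a / d := by
  have hu : (Ioc 0 b).filter (d ∣ ·) = (Ioc 0 a).filter (d ∣ ·) ∪ (Ioc a b).filter (d ∣ ·) := by
    ext x; simp only [mem_filter, mem_union, mem_Ioc]; omega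
  have hd : Disjoint ((Ioc 0 a).filter (d ∣ ·)) ((Ioc a b).filter (d ∣ ·)) := by
    rw [Finset.disjoint_left]; intro x hx hx'
    simp only [mem_filter, mem_Ioc] at hx hx'; omega
  have := congrArg Finset.card hu
  rw [Finset.card_union_of_disjoint hd, Nat.Ioc_filter_dvd_card_eq_div,
    Nat.Ioc_filter_dvd_card_eq_div] at this
  omega

lemma moebius_sum (g : ℕ) :
    ∑ d ∈ g.divisors, (ArithmeticFunction.moebius d : ℤ) = if g = 1 then 1 else 0 := by
  have := congrArg (fun f => f g) ArithmeticFunction.moebius_mul_coe_zeta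
  simp only [ArithmeticFunction.coe_mul_zeta_apply, ArithmeticFunction.one_apply] at this
  exact this

theorem stmt12 (m1 l2 m2 n k : ℕ) (hm1 : 0 < m1) (h12 : m1 < l2) (h2 : l2 ≤ m2)
    (hn : 1 < n) (hk : 1 ≤ k) :
    (((((Finset.Icc 1 m1) ∪ (Finset.Icc l2 m2)).powerset.filter
        (fun X => X.card = k ∧ Nat.gcd (X.gcd id) n = 1)).card : ℤ)) =
      ∑ d ∈ n.divisors, (ArithmeticFunction.moebius d) *
        (Nat.choose (m1 / d + m2 / d - (l2 - 1) / d) k : ℤ) := by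
  set A : Finset ℕ := Finset.Icc 1 m1 ∪ Finset.Icc l2 m2 with hA
  set S : Finset (Finset ℕ) := A.powerset.filter (fun X => X.card = k) with hS
  have hfilter : A.powerset.filter (fun X => X.card = k ∧ Nat.gcd (X.gcd id) n = 1)
      = S.filter (fun X => Nat.gcd (X.gcd id) n = 1) := by
    rw [hS, Finset.filter_filter]
  rw [hfilter]
  -- card as sum of indicators
  rw [Finset.card_filter]
  push_cast
  have step1 : ∀ X ∈ S, ((if Nat.gcd (X.gcd id) n = 1 then 1 else 0 : ℤ))
      = ∑ d ∈ n.divisors, (ArithmeticFunction.moebius d : ℤ) *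
          (if ∀ x ∈ X, d ∣ x then 1 else 0) := by
    intro X hX
    have hg : Nat.gcd (X.gcd id) n ≠ 0 := by
      intro h; rw [Nat.gcd_eq_zero_iff] at h; omega
    have hdiv : (Nat.gcd (X.gcd id) n).divisors
        = n.divisors.filter (fun d => ∀ x ∈ X, d ∣ x) := by
      ext d
      simp only [Nat.mem_divisors, Finset.mem_filter, Nat.dvd_gcd_iff]
      constructor
      · rintro ⟨⟨h1, h2⟩, _⟩
        exact ⟨⟨h2, by omega⟩, fun x hx => h1.trans (Finset.gcd_dvd hx)⟩
      · rintro ⟨⟨h2, _⟩, h1⟩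
        exact ⟨⟨Finset.dvd_gcd (fun x hx => h1 x hx), h2⟩, hg⟩
    rw [← moebius_sum, hdiv, Finset.sum_filter]
    simp [mul_comm]
  rw [Finset.sum_congr rfl step1, Finset.sum_comm]
  apply Finset.sum_congr rfl
  intro d hd
  rw [Nat.mem_divisors] at hd
  have hd0 : 0 < d := Nat.pos_of_dvd_of_pos hd.1 (by omega)
  rw [← Finset.mul_sum]
  congr 1
  rw [← Finset.sum_filter, Finset.sum_const, nsmul_eq_mul, mul_one]
  have hcA : (A.filter (d ∣ ·)).card = m1 / d + m2 / d - (l2 - 1) / d := by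
    have e1 : Finset.Icc 1 m1 = Finset.Ioc 0 m1 := by ext x; simp; omega
    have e2 : Finset.Icc l2 m2 = Finset.Ioc (l2 - 1) m2 := by ext x; simp; omega
    have hdisj : Disjoint ((Finset.Ioc 0 m1).filter (d ∣ ·))
        ((Finset.Ioc (l2 - 1) m2).filter (d ∣ ·)) := by
      rw [Finset.disjoint_left]; intro x hx hx'
      simp only [Finset.mem_filter, Finset.mem_Ioc] at hx hx'; omega
    rw [hA, e1, e2, Finset.filter_union, Finset.card_union_of_disjoint hdisj,
      countIoc _ _ _ (by omega), countIoc _ _ _ (by omega)]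
    have hle : (l2 - 1) / d ≤ m2 / d := Nat.div_le_div_right (by omega)
    rw [Nat.zero_div, Nat.sub_zero, Nat.add_sub_assoc hle]
  rw [hS, countA A d k, hcA]
end
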